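/- Polygonal inequality for tripartite mixed states: Let a, b, c ≥ 1 and let ρ be a density matrix indexed by Fin a × Fin b × Fin c. Define the one-body reduced density matrices ρ_A i i' = ∑ j k, ρ ((i,j,k),(i',j,k)), ρ_B j j' = ∑ i k, ρ ((i,j,k),(i,j',k)), and ρ_C k k' = ∑ i j, ρ ((i,j,k),(i,j,k')). Then λmax(ρ_A) + λmax(ρ_B) + λmax(ρ_C) ≤ 2 + λmax(ρ). -/

import Mathlib

open scoped BigOperators
open ComplexOrder

open Classical in
/-- The largest eigenvalue `λmax` of a Hermitian matrix; junk value `0` for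
non-Hermitian matrices. -/
noncomputable def lmaxM {m : Type*} [Fintype m] [DecidableEq m] (H : Matrix m m ℂ) : ℝ :=
  if h : H.IsHermitian then ⨆ i, h.eigenvalues i else 0

/-- One-body reduced density matrix of a tripartite state on the first factor. -/
noncomputable def redA {a b c : ℕ}
    (ρ : Matrix (Fin a × Fin b × Fin c) (Fin a × Fin b × Fin c) ℂ) :
    Matrix (Fin a) (Fin a) ℂ :=
  Matrix.of fun i i' => ∑ j, ∑ k, ρ (i, j, k) (i', j, k)

/-- One-body reduced density matrix of a tripartite state on the second factor. -/
noncomputable def redB {a b c : ℕ}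
    (ρ : Matrix (Fin a × Fin b × Fin c) (Fin a × Fin b × Fin c) ℂ) :
    Matrix (Fin b) (Fin b) ℂ :=
  Matrix.of fun j j' => ∑ i, ∑ k, ρ (i, j, k) (i, j', k)

/-- One-body reduced density matrix of a tripartite state on the third factor. -/
noncomputable def redC {a b c : ℕ}
    (ρ : Matrix (Fin a × Fin b × Fin c) (Fin a × Fin b × Fin c) ℂ) :
    Matrix (Fin c) (Fin c) ℂ :=
  Matrix.of fun k k' => ∑ i, ∑ j, ρ (i, j, k) (i, j, k')

/-! ### Auxiliary material -/

open scoped Kronecker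
open Matrix

section lmax

variable {n : Type*} [Fintype n] [DecidableEq n]

lemma lmaxM_def {H : Matrix n n ℂ} (h : H.IsHermitian) :
    lmaxM H = ⨆ i, h.eigenvalues i := by
  simp [lmaxM, h]

lemma eigenvalues_le_lmaxM {H : Matrix n n ℂ} (h : H.IsHermitian) (i : n) :
    h.eigenvalues i ≤ lmaxM H := by
  rw [lmaxM_def h]
  exact le_ciSup (Set.Finite.bddAbove (Set.finite_range _)) i

lemma exists_lmaxM_eigenvector [Nonempty n] {H : Matrix n n ℂ} (h : H.IsHermitian) :
    ∃ u : n → ℂ, (∑ i, star (u i) * u i) = 1 ∧ H *ᵥ u = (lmaxM H : ℂ) • u := by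
  obtain ⟨i0, hi0⟩ := Finite.exists_max h.eigenvalues
  have hmax : lmaxM H = h.eigenvalues i0 := by
    rw [lmaxM_def h]
    exact le_antisymm (ciSup_le hi0) (le_ciSup (Set.Finite.bddAbove (Set.finite_range _)) i0)
  refine ⟨⇑(h.eigenvectorBasis i0), ?_, ?_⟩
  · have h1 : (inner ℂ (h.eigenvectorBasis i0) (h.eigenvectorBasis i0) : ℂ) = 1 := by
      rw [inner_self_eq_norm_sq_to_K, h.eigenvectorBasis.orthonormal.1 i0]
      norm_num
    rw [PiLp.inner_apply] at h1
    rw [← h1]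
    exact Finset.sum_congr rfl fun i _ => by rw [RCLike.inner_apply]; exact mul_comm _ _
  · rw [h.mulVec_eigenvectorBasis i0, hmax, RCLike.real_smul_eq_coe_smul (K := ℂ)]; rfl

lemma rayleigh_le_lmaxM {A : Matrix n n ℂ} (hA : A.IsHermitian)
    (x : n → ℂ) (hx : star x ⬝ᵥ x = 1) :
    Complex.re (star x ⬝ᵥ A *ᵥ x) ≤ lmaxM A := by
  set U : Matrix n n ℂ := (hA.eigenvectorUnitary : Matrix n n ℂ) with hUdef
  have hdnn : (0 : n → ℂ) ≤ fun i => ((lmaxM A - hA.eigenvalues i : ℝ) : ℂ) := by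
    intro i
    simp only [Pi.zero_apply]
    rw [Complex.zero_le_real]
    exact sub_nonneg.2 (eigenvalues_le_lmaxM hA i)
  have key : (lmaxM A : ℂ) • (1 : Matrix n n ℂ) - A =
      U * Matrix.diagonal (fun i => ((lmaxM A - hA.eigenvalues i : ℝ) : ℂ)) * Uᴴ := by
    have hdd : Matrix.diagonal (fun i => ((lmaxM A - hA.eigenvalues i : ℝ) : ℂ)) =
        (lmaxM A : ℂ) • (1 : Matrix n n ℂ)
          - Matrix.diagonal (RCLike.ofReal ∘ hA.eigenvalues) := by
      ext i j
      by_cases h : i = j <;>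
        simp [Matrix.diagonal_apply, Matrix.one_apply, h, Complex.ofReal_sub]
    have hU : U * Uᴴ = 1 := by
      rw [← Matrix.star_eq_conjTranspose]
      exact (Matrix.mem_unitaryGroup_iff).mp hA.eigenvectorUnitary.2
    rw [hdd, Matrix.mul_sub, Matrix.sub_mul, Matrix.mul_smul, Matrix.smul_mul, mul_one, hU]
    congr 1
    conv_lhs => rw [hA.spectral_theorem]
    rw [Unitary.conjStarAlgAut_apply, Matrix.star_eq_conjTranspose]
  have hpsd : ((lmaxM A : ℂ) • (1 : Matrix n n ℂ) - A).PosSemidef := by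
    rw [key]
    exact (Matrix.PosSemidef.diagonal hdnn).mul_mul_conjTranspose_same U
  have h0 := hpsd.re_dotProduct_nonneg x
  have hcalc : star x ⬝ᵥ (((lmaxM A : ℂ) • (1 : Matrix n n ℂ) - A) *ᵥ x)
      = (lmaxM A : ℂ) - star x ⬝ᵥ A *ᵥ x := by
    rw [Matrix.sub_mulVec, dotProduct_sub, Matrix.smul_mulVec, Matrix.one_mulVec,
      dotProduct_smul, hx, smul_eq_mul, mul_one]
  rw [hcalc] at h0
  have h0' : (0:ℝ) ≤ lmaxM A - Complex.re (star x ⬝ᵥ A *ᵥ x) := by simpa using h0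
  linarith

lemma trace_mul_psd_nonneg {A B : Matrix n n ℂ} (hA : A.PosSemidef) (hB : B.PosSemidef) :
    0 ≤ Complex.re ((A * B).trace) := by
  obtain ⟨C, hC⟩ : ∃ B : Matrix _ _ ℂ, A = Bᴴ * B := by open scoped MatrixOrder in exact CStarAlgebra.nonneg_iff_eq_star_mul_self.mp hA.nonneg
  have h1 : (A * B).trace = (C * B * Cᴴ).trace := by
    rw [hC, Matrix.mul_assoc, Matrix.trace_mul_comm, Matrix.mul_assoc]
  rw [h1, Matrix.trace]
  rw [Complex.re_sum]
  refine Finset.sum_nonneg fun i _ => ?_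
  have h2 := (hB.mul_mul_conjTranspose_same C).re_dotProduct_nonneg (Pi.single i 1)
  simpa [dotProduct, Matrix.mulVec, Pi.single_apply, Finset.mul_sum,
    Matrix.diag] using h2

end lmax

section proj

variable {n : Type*} [Fintype n] [DecidableEq n]

/-- rank-one projection onto `u` -/
def pj (u : n → ℂ) : Matrix n n ℂ := Matrix.of fun i i' => u i * star (u i')

lemma pj_apply (u : n → ℂ) (i i' : n) : pj u i i' = u i * star (u i') := rfl

lemma pj_mul_pj {u : n → ℂ} (hu : ∑ i, star (u i) * u i = 1) : pj u * pj u = pj u := by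
  ext i i'
  simp only [Matrix.mul_apply, pj_apply]
  calc ∑ t, u i * star (u t) * (u t * star (u i'))
      = (u i * star (u i')) * ∑ t, star (u t) * u t := by
        rw [Finset.mul_sum]; exact Finset.sum_congr rfl fun t _ => by ring
    _ = u i * star (u i') := by rw [hu, mul_one]

lemma pj_conjTranspose (u : n → ℂ) : (pj u)ᴴ = pj u := by
  ext i i'
  simp [pj_apply, Matrix.conjTranspose_apply, mul_comm]

lemma pj_posSemidef {u : n → ℂ} (hu : ∑ i, star (u i) * u i = 1) : (pj u).PosSemidef := by
  have : pj u = (pj u)ᴴ * pj u := by rw [pj_conjTranspose, pj_mul_pj hu]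
  rw [this]
  exact Matrix.posSemidef_conjTranspose_mul_self _

lemma one_sub_pj_posSemidef {u : n → ℂ} (hu : ∑ i, star (u i) * u i = 1) :
    (1 - pj u).PosSemidef := by
  have h : (1 - pj u) = (1 - pj u)ᴴ * (1 - pj u) := by
    rw [Matrix.conjTranspose_sub, Matrix.conjTranspose_one, pj_conjTranspose,
      Matrix.sub_mul, Matrix.mul_sub, Matrix.mul_sub, pj_mul_pj hu]
    simp only [Matrix.one_mul, Matrix.mul_one]
    abel
  rw [h]
  exact Matrix.posSemidef_conjTranspose_mul_self _

end proj

section tkdef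

variable {a b c : ℕ}

/-- entrywise triple tensor product -/
def tk (X : Matrix (Fin a) (Fin a) ℂ) (Y : Matrix (Fin b) (Fin b) ℂ)
    (Z : Matrix (Fin c) (Fin c) ℂ) :
    Matrix (Fin a × Fin b × Fin c) (Fin a × Fin b × Fin c) ℂ :=
  X ⊗ₖ (Y ⊗ₖ Z)

lemma tk_apply (X : Matrix (Fin a) (Fin a) ℂ) (Y : Matrix (Fin b) (Fin b) ℂ)
    (Z : Matrix (Fin c) (Fin c) ℂ) (p q : Fin a × Fin b × Fin c) :
    tk X Y Z p q = X p.1 q.1 * (Y p.2.1 q.2.1 * Z p.2.2 q.2.2) := rfl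

lemma tk_mul (X X' : Matrix (Fin a) (Fin a) ℂ) (Y Y' : Matrix (Fin b) (Fin b) ℂ)
    (Z Z' : Matrix (Fin c) (Fin c) ℂ) :
    tk X Y Z * tk X' Y' Z' = tk (X * X') (Y * Y') (Z * Z') := by
  unfold tk
  rw [← Matrix.mul_kronecker_mul, ← Matrix.mul_kronecker_mul]

lemma tk_conjTranspose (X : Matrix (Fin a) (Fin a) ℂ) (Y : Matrix (Fin b) (Fin b) ℂ)
    (Z : Matrix (Fin c) (Fin c) ℂ) :
    (tk X Y Z)ᴴ = tk Xᴴ Yᴴ Zᴴ := by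
  ext ⟨i, j, k⟩ ⟨i', j', k'⟩
  simp [tk_apply, Matrix.conjTranspose_apply]

lemma tk_posSemidef {X : Matrix (Fin a) (Fin a) ℂ} {Y : Matrix (Fin b) (Fin b) ℂ}
    {Z : Matrix (Fin c) (Fin c) ℂ} (hX : X.PosSemidef) (hY : Y.PosSemidef)
    (hZ : Z.PosSemidef) : (tk X Y Z).PosSemidef := by
  obtain ⟨M, hM⟩ : ∃ B : Matrix _ _ ℂ, X = Bᴴ * B := by open scoped MatrixOrder in exact CStarAlgebra.nonneg_iff_eq_star_mul_self.mp hX.nonneg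
  obtain ⟨N, hN⟩ : ∃ B : Matrix _ _ ℂ, Y = Bᴴ * B := by open scoped MatrixOrder in exact CStarAlgebra.nonneg_iff_eq_star_mul_self.mp hY.nonneg
  obtain ⟨P, hP⟩ : ∃ B : Matrix _ _ ℂ, Z = Bᴴ * B := by open scoped MatrixOrder in exact CStarAlgebra.nonneg_iff_eq_star_mul_self.mp hZ.nonneg
  rw [hM, hN, hP, ← tk_mul, ← tk_conjTranspose]
  exact Matrix.posSemidef_conjTranspose_mul_self _

lemma tk_one : tk (1 : Matrix (Fin a) (Fin a) ℂ) (1 : Matrix (Fin b) (Fin b) ℂ)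
    (1 : Matrix (Fin c) (Fin c) ℂ) = 1 := by
  unfold tk
  rw [Matrix.one_kronecker_one, Matrix.one_kronecker_one]

/-- the key operator identity -/
lemma tk_key (u : Fin a → ℂ) (v : Fin b → ℂ) (w : Fin c → ℂ) :
    tk (1 - pj u) (1 - pj v) (pj w) + tk 1 (1 - pj v) (1 - pj w)
      + tk (1 - pj u) 1 (1 - pj w)
    = tk (pj u) (pj v) (pj w) + tk 1 1 1 + tk 1 1 1
      - tk (pj u) 1 1 - tk 1 (pj v) 1 - tk 1 1 (pj w) := by
  ext ⟨i, j, k⟩ ⟨i', j', k'⟩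
  simp only [Matrix.add_apply, Matrix.sub_apply, tk_apply, pj_apply, Matrix.one_apply]
  ring

/-- traces against ρ -/
lemma trace_tkA (ρ : Matrix (Fin a × Fin b × Fin c) (Fin a × Fin b × Fin c) ℂ)
    (u : Fin a → ℂ) :
    (ρ * tk (pj u) 1 1).trace = star u ⬝ᵥ (redA ρ *ᵥ u) := by
  simp only [Matrix.trace, Matrix.diag, Matrix.mul_apply, tk_apply, pj, Matrix.one_apply,
    dotProduct, Matrix.mulVec, redA, Matrix.of_apply, Fintype.sum_prod_type, Pi.star_apply,
    mul_ite, ite_mul, mul_zero, zero_mul, mul_one, one_mul, Finset.sum_ite_eq,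
    Finset.sum_ite_eq', Finset.mem_univ, if_true, Finset.mul_sum, Finset.sum_mul]
  refine Finset.sum_congr rfl fun i _ => ?_
  conv_rhs => rw [Finset.sum_comm]
  refine Finset.sum_congr rfl fun j _ => ?_
  conv_rhs => rw [Finset.sum_comm]
  exact Finset.sum_congr rfl fun k _ => Finset.sum_congr rfl fun i' _ => by ring

lemma trace_tkB (ρ : Matrix (Fin a × Fin b × Fin c) (Fin a × Fin b × Fin c) ℂ)
    (v : Fin b → ℂ) :
    (ρ * tk 1 (pj v) 1).trace = star v ⬝ᵥ (redB ρ *ᵥ v) := by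
  simp only [Matrix.trace, Matrix.diag, Matrix.mul_apply, tk_apply, pj, Matrix.one_apply,
    dotProduct, Matrix.mulVec, redB, Matrix.of_apply, Fintype.sum_prod_type, Pi.star_apply,
    mul_ite, ite_mul, mul_zero, zero_mul, mul_one, one_mul, Finset.sum_ite_eq,
    Finset.sum_ite_eq', Finset.mem_univ, if_true, Finset.mul_sum, Finset.sum_mul]
  -- collapse the remaining delta over the first factor
  conv_lhs => enter [2, i, 2, j, 2, k]; rw [Finset.sum_comm]
  simp only [Finset.sum_ite_eq', Finset.mem_univ, if_true]
  -- now reorder (i, j, k, j') into (j, j', i, k)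
  conv_lhs => rw [Finset.sum_comm]
  conv_lhs => enter [2, j, 2, i]; rw [Finset.sum_comm]
  conv_lhs => enter [2, j]; rw [Finset.sum_comm]
  exact Finset.sum_congr rfl fun j _ => Finset.sum_congr rfl fun j' _ =>
    Finset.sum_congr rfl fun i _ => Finset.sum_congr rfl fun k _ => by ring

lemma trace_tkC (ρ : Matrix (Fin a × Fin b × Fin c) (Fin a × Fin b × Fin c) ℂ)
    (w : Fin c → ℂ) :
    (ρ * tk 1 1 (pj w)).trace = star w ⬝ᵥ (redC ρ *ᵥ w) := by
  simp only [Matrix.trace, Matrix.diag, Matrix.mul_apply, tk_apply, pj, Matrix.one_apply,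
    dotProduct, Matrix.mulVec, redC, Matrix.of_apply, Fintype.sum_prod_type, Pi.star_apply,
    mul_ite, ite_mul, mul_zero, zero_mul, mul_one, one_mul, Finset.sum_ite_eq,
    Finset.sum_ite_eq', Finset.mem_univ, if_true, Finset.mul_sum, Finset.sum_mul]
  -- collapse the deltas over the first two factors
  conv_lhs => enter [2, i, 2, j, 2, k, 2, i']; rw [Finset.sum_comm]
  simp only [Finset.sum_ite_eq', Finset.mem_univ, if_true]
  conv_lhs => enter [2, i, 2, j, 2, k]; rw [Finset.sum_comm]
  simp only [Finset.sum_ite_eq', Finset.mem_univ, if_true]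
  -- now reorder (i, j, k, k') into (k, k', i, j)
  conv_lhs => enter [2, i]; rw [Finset.sum_comm]
  conv_lhs => enter [2, i, 2, k]; rw [Finset.sum_comm]
  conv_lhs => rw [Finset.sum_comm]
  conv_lhs => enter [2, k]; rw [Finset.sum_comm]
  exact Finset.sum_congr rfl fun k _ => Finset.sum_congr rfl fun k' _ =>
    Finset.sum_congr rfl fun i _ => Finset.sum_congr rfl fun j _ => by ring

lemma trace_tkP (ρ : Matrix (Fin a × Fin b × Fin c) (Fin a × Fin b × Fin c) ℂ)
    (u : Fin a → ℂ) (v : Fin b → ℂ) (w : Fin c → ℂ) :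
    (ρ * tk (pj u) (pj v) (pj w)).trace =
      star (fun p : Fin a × Fin b × Fin c => u p.1 * v p.2.1 * w p.2.2) ⬝ᵥ
        (ρ *ᵥ fun p => u p.1 * v p.2.1 * w p.2.2) := by
  simp only [Matrix.trace, Matrix.diag, Matrix.mul_apply, tk_apply, pj,
    dotProduct, Matrix.mulVec, Matrix.of_apply, Fintype.sum_prod_type, Pi.star_apply,
    Finset.mul_sum, Finset.sum_mul, star_mul']
  exact Finset.sum_congr rfl fun _ _ => Finset.sum_congr rfl fun _ _ =>
    Finset.sum_congr rfl fun _ _ => Finset.sum_congr rfl fun _ _ =>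
    Finset.sum_congr rfl fun _ _ => Finset.sum_congr rfl fun _ _ => by ring

end tkdef

/-! ### Hermiticity of the reduced matrices -/

section herm

variable {a b c : ℕ} {ρ : Matrix (Fin a × Fin b × Fin c) (Fin a × Fin b × Fin c) ℂ}

lemma red_herm (hρ : ρ.IsHermitian) :
    (redA ρ).IsHermitian ∧ (redB ρ).IsHermitian ∧ (redC ρ).IsHermitian := by
  have h : ∀ p q, star (ρ q p) = ρ p q := fun p q => congrFun (congrFun hρ p) q
  refine ⟨?_, ?_, ?_⟩ <;>
  · ext x y
    simp only [Matrix.conjTranspose_apply, redA, redB, redC, Matrix.of_apply, star_sum]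
    refine Finset.sum_congr rfl fun s _ => Finset.sum_congr rfl fun t _ => h _ _

end herm

theorem stmt10 (a b c : ℕ) (ha : 1 ≤ a) (hb : 1 ≤ b) (hc : 1 ≤ c)
    (ρ : Matrix (Fin a × Fin b × Fin c) (Fin a × Fin b × Fin c) ℂ)
    (hρ : ρ.PosSemidef) (htr : ρ.trace = 1) :
    lmaxM (redA ρ) + lmaxM (redB ρ) + lmaxM (redC ρ) ≤ 2 + lmaxM ρ := by
  haveI : Nonempty (Fin a) := ⟨⟨0, ha⟩⟩
  haveI : Nonempty (Fin b) := ⟨⟨0, hb⟩⟩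
  haveI : Nonempty (Fin c) := ⟨⟨0, hc⟩⟩
  obtain ⟨hAH, hBH, hCH⟩ := red_herm hρ.1
  obtain ⟨u, hu1, huE⟩ := exists_lmaxM_eigenvector hAH
  obtain ⟨v, hv1, hvE⟩ := exists_lmaxM_eigenvector hBH
  obtain ⟨w, hw1, hwE⟩ := exists_lmaxM_eigenvector hCH
  -- the product vector
  set ψ : Fin a × Fin b × Fin c → ℂ := fun p => u p.1 * v p.2.1 * w p.2.2 with hψ
  have hψ1 : star ψ ⬝ᵥ ψ = 1 := by
    have : star ψ ⬝ᵥ ψ =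
        (∑ i, star (u i) * u i) * ((∑ j, star (v j) * v j) * (∑ k, star (w k) * w k)) := by
      simp only [dotProduct, Pi.star_apply, hψ, Fintype.sum_prod_type, Finset.mul_sum,
        Finset.sum_mul, star_mul']
      conv_lhs => rw [Finset.sum_comm]
      conv_lhs => enter [2, j]; rw [Finset.sum_comm]
      conv_lhs => rw [Finset.sum_comm]
      exact Finset.sum_congr rfl fun _ _ => Finset.sum_congr rfl fun _ _ =>
        Finset.sum_congr rfl fun _ _ => by ring
    rw [this, hu1, hv1, hw1]
    norm_num
  -- the quadratic forms attain the lmax values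
  have qA : star u ⬝ᵥ (redA ρ *ᵥ u) = ((lmaxM (redA ρ) : ℝ) : ℂ) := by
    rw [huE, dotProduct_smul, smul_eq_mul]
    have : star u ⬝ᵥ u = 1 := hu1
    rw [this, mul_one]
  have qB : star v ⬝ᵥ (redB ρ *ᵥ v) = ((lmaxM (redB ρ) : ℝ) : ℂ) := by
    rw [hvE, dotProduct_smul, smul_eq_mul]
    have : star v ⬝ᵥ v = 1 := hv1
    rw [this, mul_one]
  have qC : star w ⬝ᵥ (redC ρ *ᵥ w) = ((lmaxM (redC ρ) : ℝ) : ℂ) := by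
    rw [hwE, dotProduct_smul, smul_eq_mul]
    have : star w ⬝ᵥ w = 1 := hw1
    rw [this, mul_one]
  -- the PSD witness
  set S : Matrix (Fin a × Fin b × Fin c) (Fin a × Fin b × Fin c) ℂ :=
    tk (1 - pj u) (1 - pj v) (pj w) + tk 1 (1 - pj v) (1 - pj w)
      + tk (1 - pj u) 1 (1 - pj w) with hS
  have hSpsd : S.PosSemidef := by
    refine Matrix.PosSemidef.add (Matrix.PosSemidef.add ?_ ?_) ?_
    · exact tk_posSemidef (one_sub_pj_posSemidef hu1) (one_sub_pj_posSemidef hv1)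
        (pj_posSemidef hw1)
    · exact tk_posSemidef Matrix.PosSemidef.one (one_sub_pj_posSemidef hv1)
        (one_sub_pj_posSemidef hw1)
    · exact tk_posSemidef (one_sub_pj_posSemidef hu1) Matrix.PosSemidef.one
        (one_sub_pj_posSemidef hw1)
  have h0 : 0 ≤ Complex.re ((ρ * S).trace) := trace_mul_psd_nonneg hρ hSpsd
  -- expand the trace
  have hexp : (ρ * S).trace =
      (star ψ ⬝ᵥ ρ *ᵥ ψ) + 1 + 1 - ((lmaxM (redA ρ) : ℝ) : ℂ)
        - ((lmaxM (redB ρ) : ℝ) : ℂ) - ((lmaxM (redC ρ) : ℝ) : ℂ) := by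
    have hkey := tk_key u v w
    rw [hS, hkey, Matrix.mul_sub, Matrix.mul_sub, Matrix.mul_sub, Matrix.mul_add,
      Matrix.mul_add, Matrix.trace_sub, Matrix.trace_sub, Matrix.trace_sub,
      Matrix.trace_add, Matrix.trace_add, tk_one, Matrix.mul_one, htr,
      trace_tkA, trace_tkB, trace_tkC, trace_tkP, qA, qB, qC]
  rw [hexp] at h0
  simp only [Complex.sub_re, Complex.add_re, Complex.ofReal_re, Complex.one_re] at h0
  have hray : Complex.re (star ψ ⬝ᵥ ρ *ᵥ ψ) ≤ lmaxM ρ := rayleigh_le_lmaxM hρ.1 ψ hψ1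
  linarith
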